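/- There is a universal constant c>0 such that the following holds. Let K be a Markov kernel on a finite state space U with K(u,u)≥1/2 for every u∈U, reversible with respect to a positive stationary probability distribution ν. Let f:U→[0,∞) satisfy Σ_u ν(u)f(u)=1, and let (Kf)(u)=Σ_v K(u,v)f(v). Then Ent_ν(f) − Ent_ν(Kf) ≥ c·Σ_{u,v} ν(u)K(u,v)·(f(u)−f(v))²/(f(u)+f(v)), where each summand with f(u)=f(v)=0 is interpreted as 0. -/
import Mathlib


noncomputable section

/-- Entropy with respect to `ν`: `Ent_ν(g) = Σ_u ν(u) g(u) log g(u)` (note `0·log 0 = 0`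
holds automatically since `Real.log 0 = 0`). -/
def entNu {U : Type} [Fintype U] (ν g : U → ℝ) : ℝ := ∑ u, ν u * (g u * Real.log (g u))

open Real Finset
-- L1: (x-y)^2/(x+y) ≤ 2 (√x - √y)^2
lemma L1 {x y : ℝ} (hx : 0 ≤ x) (hy : 0 ≤ y) :
    (x - y) ^ 2 / (x + y) ≤ 2 * (Real.sqrt x - Real.sqrt y) ^ 2 := by
  rcases eq_or_lt_of_le (by positivity : (0:ℝ) ≤ x + y) with h | h
  · have hx0 : x = 0 := by linarith [hy]
    have hy0 : y = 0 := by linarith [hx]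
    simp [hx0, hy0]
  · rw [div_le_iff₀ h]
    have ha := Real.sq_sqrt hx
    have hb := Real.sq_sqrt hy
    have han := Real.sqrt_nonneg x
    have hbn := Real.sqrt_nonneg y
    nlinarith [sq_nonneg (Real.sqrt x - Real.sqrt y), sq_nonneg (Real.sqrt x + Real.sqrt y),
      sq_nonneg ((Real.sqrt x - Real.sqrt y) * (Real.sqrt x - Real.sqrt y)),
      mul_nonneg (sq_nonneg (Real.sqrt x - Real.sqrt y)) (sq_nonneg (Real.sqrt x - Real.sqrt y))]

-- L2: (√x - √y)^2 ≤ x log x - x log y - x + y  (y > 0, x ≥ 0)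
lemma L2 {x y : ℝ} (hx : 0 ≤ x) (hy : 0 < y) :
    (Real.sqrt x - Real.sqrt y) ^ 2 ≤ x * Real.log x - x * Real.log y - x + y := by
  rcases eq_or_lt_of_le hx with h | hxpos
  · simp [← h, Real.sq_sqrt hy.le]
  · have hsx : (0:ℝ) < Real.sqrt x := Real.sqrt_pos.2 hxpos
    have hsy : (0:ℝ) < Real.sqrt y := Real.sqrt_pos.2 hy
    have hlog : Real.log (Real.sqrt y / Real.sqrt x) ≤ Real.sqrt y / Real.sqrt x - 1 :=
      Real.log_le_sub_one_of_pos (by positivity)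
    rw [Real.log_div hsy.ne' hsx.ne', Real.log_sqrt hy.le, Real.log_sqrt hxpos.le] at hlog
    have hmul : x * (Real.log y / 2 - Real.log x / 2) ≤ x * (Real.sqrt y / Real.sqrt x - 1) :=
      mul_le_mul_of_nonneg_left hlog hx
    have hxs : x * (Real.sqrt y / Real.sqrt x) = Real.sqrt x * Real.sqrt y := by
      rw [mul_div_assoc', mul_comm x (Real.sqrt y), mul_div_assoc, Real.div_sqrt, mul_comm]
    rw [show x * (Real.sqrt y / Real.sqrt x - 1) = Real.sqrt x * Real.sqrt y - x from by
      rw [mul_sub, mul_one, hxs]] at hmul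
    have ha := Real.sq_sqrt hx
    have hb := Real.sq_sqrt hy.le
    nlinarith [hmul]



-- L3: variance comparison using laziness
lemma L3 {U : Type} [Fintype U] (p x : U → ℝ) (u : U) (s : ℝ)
    (hp : ∀ v, 0 ≤ p v) (hsum : ∑ v, p v = 1) (hu : (1/2:ℝ) ≤ p u) :
    ∑ v, p v * (x v - x u) ^ 2 ≤ 6 * ∑ v, p v * (x v - s) ^ 2 := by
  have h1 : ∑ v, p v * (x v - x u) ^ 2 ≤
      ∑ v, (2 * (p v * (x v - s) ^ 2) + 2 * (p v * (x u - s) ^ 2)) := by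
    apply Finset.sum_le_sum
    intro v _
    have := hp v
    nlinarith [sq_nonneg (x v + x u - 2 * s)]
  have h2 : ∑ v, (2 * (p v * (x v - s) ^ 2) + 2 * (p v * (x u - s) ^ 2)) =
      2 * ∑ v, p v * (x v - s) ^ 2 + 2 * (x u - s) ^ 2 := by
    rw [Finset.sum_add_distrib, ← Finset.mul_sum, ← Finset.mul_sum, ← Finset.sum_mul, hsum]
    ring
  have h3 : p u * (x u - s) ^ 2 ≤ ∑ v, p v * (x v - s) ^ 2 :=
    Finset.single_le_sum (f := fun v => p v * (x v - s) ^ 2)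
      (fun v _ => mul_nonneg (hp v) (sq_nonneg _)) (Finset.mem_univ u)
  have h4 : (x u - s) ^ 2 ≤ 2 * ∑ v, p v * (x v - s) ^ 2 := by nlinarith [sq_nonneg (x u - s)]
  linarith


lemma pointwise {U : Type} [Fintype U] (p f : U → ℝ) (u : U)
    (hp : ∀ v, 0 ≤ p v) (hsum : ∑ v, p v = 1) (hu : (1/2:ℝ) ≤ p u)
    (hf : ∀ v, 0 ≤ f v) :
    (1/12 : ℝ) * ∑ v, p v * ((f u - f v) ^ 2 / (f u + f v)) ≤
      ∑ v, p v * (f v * Real.log (f v)) -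
        (∑ v, p v * f v) * Real.log (∑ v, p v * f v) := by
  set m := ∑ v, p v * f v with hm
  have hm0 : 0 ≤ m := Finset.sum_nonneg (fun v _ => mul_nonneg (hp v) (hf v))
  rcases eq_or_lt_of_le hm0 with hmz | hmpos
  · -- m = 0 case
    have hz : ∀ v, p v * f v = 0 := fun v =>
      (Finset.sum_eq_zero_iff_of_nonneg (fun v _ => mul_nonneg (hp v) (hf v))).1 hmz.symm v
        (Finset.mem_univ v)
    have hfu : f u = 0 := by
      rcases mul_eq_zero.1 (hz u) with h | h
      · linarith
      · exact h
    have hL : ∀ v, p v * ((f u - f v) ^ 2 / (f u + f v)) = 0 := by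
      intro v
      rcases mul_eq_zero.1 (hz v) with h | h
      · rw [h]; ring
      · rw [hfu, h]; norm_num
    have hR : ∀ v, p v * (f v * Real.log (f v)) = 0 := by
      intro v
      rcases mul_eq_zero.1 (hz v) with h | h
      · rw [h]; ring
      · rw [h]; simp
    rw [Finset.sum_eq_zero (fun v _ => hL v), Finset.sum_eq_zero (fun v _ => hR v), ← hmz]
    simp
  · -- m > 0
    have key1 : ∑ v, p v * ((f u - f v) ^ 2 / (f u + f v)) ≤
        2 * ∑ v, p v * (Real.sqrt (f v) - Real.sqrt (f u)) ^ 2 := by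
      rw [Finset.mul_sum]
      apply Finset.sum_le_sum; intro v _
      calc p v * ((f u - f v) ^ 2 / (f u + f v))
          ≤ p v * (2 * (Real.sqrt (f u) - Real.sqrt (f v)) ^ 2) :=
            mul_le_mul_of_nonneg_left (L1 (hf u) (hf v)) (hp v)
        _ = 2 * (p v * (Real.sqrt (f v) - Real.sqrt (f u)) ^ 2) := by ring
    have key2 : ∑ v, p v * (Real.sqrt (f v) - Real.sqrt (f u)) ^ 2 ≤
        6 * ∑ v, p v * (Real.sqrt (f v) - Real.sqrt m) ^ 2 :=
      L3 p (fun v => Real.sqrt (f v)) u (Real.sqrt m) hp hsum hu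
    have key3 : ∑ v, p v * (Real.sqrt (f v) - Real.sqrt m) ^ 2 ≤
        ∑ v, p v * (f v * Real.log (f v) - f v * Real.log m - f v + m) := by
      apply Finset.sum_le_sum; intro v _
      exact mul_le_mul_of_nonneg_left (L2 (hf v) hmpos) (hp v)
    have key4 : ∑ v, p v * (f v * Real.log (f v) - f v * Real.log m - f v + m)
        = (∑ v, p v * (f v * Real.log (f v))) - m * Real.log m := by
      have e0 : ∀ v, p v * (f v * Real.log (f v) - f v * Real.log m - f v + m)
          = p v * (f v * Real.log (f v)) - p v * f v * Real.log m - p v * f v + p v * m :=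
        fun v => by ring
      simp_rw [e0]
      rw [Finset.sum_add_distrib, Finset.sum_sub_distrib, Finset.sum_sub_distrib,
        ← Finset.sum_mul, ← Finset.sum_mul, ← hm, hsum]
      ring
    linarith

/-- One-step entropy decay for a lazy reversible Markov kernel: there is a universal `c > 0`
with `Ent_ν(f) − Ent_ν(Kf) ≥ c Σ_{u,v} ν(u)K(u,v)(f(u)−f(v))²/(f(u)+f(v))`, where summands
with `f(u) = f(v) = 0` are `0` (automatic since `0/0 = 0`). -/
theorem stmt3 :
    ∃ c > (0 : ℝ),
      ∀ (U : Type) [Fintype U],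
      ∀ (K : U → U → ℝ) (ν : U → ℝ) (f : U → ℝ),
        (∀ u v, 0 ≤ K u v) → (∀ u, ∑ v, K u v = 1) → (∀ u, (1 / 2 : ℝ) ≤ K u u) →
        (∀ u, 0 < ν u) → (∑ u, ν u = 1) →
        (∀ u v, ν u * K u v = ν v * K v u) →
        (∀ u, 0 ≤ f u) → (∑ u, ν u * f u = 1) →
        c * ∑ u, ∑ v, ν u * K u v * ((f u - f v) ^ 2 / (f u + f v))
          ≤ entNu ν f - entNu ν (fun u => ∑ v, K u v * f v) := by
  refine ⟨1/12, by norm_num, ?_⟩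
  intro U _ K ν f hK hK1 hlazy hν hν1 hrev hf hf1
  have hstat : ∀ v, ∑ u, ν u * K u v = ν v := by
    intro v
    calc ∑ u, ν u * K u v = ∑ u, ν v * K v u :=
          Finset.sum_congr rfl (fun u _ => hrev u v)
      _ = ν v * ∑ u, K v u := by rw [Finset.mul_sum]
      _ = ν v := by rw [hK1 v, mul_one]
  have hEntf : entNu ν f = ∑ u, ν u * ∑ v, K u v * (f v * Real.log (f v)) := by
    unfold entNu
    calc ∑ u, ν u * (f u * Real.log (f u))
        = ∑ v, (∑ u, ν u * K u v) * (f v * Real.log (f v)) :=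
          Finset.sum_congr rfl (fun v _ => by rw [hstat v])
      _ = ∑ v, ∑ u, ν u * K u v * (f v * Real.log (f v)) := by
          simp_rw [Finset.sum_mul]
      _ = ∑ u, ∑ v, ν u * K u v * (f v * Real.log (f v)) := Finset.sum_comm
      _ = ∑ u, ν u * ∑ v, K u v * (f v * Real.log (f v)) := by
          simp_rw [Finset.mul_sum, mul_assoc]
  have hpt : ∀ u, ν u * ((1/12:ℝ) * ∑ v, K u v * ((f u - f v) ^ 2 / (f u + f v))) ≤
      ν u * (∑ v, K u v * (f v * Real.log (f v)) -
        (∑ v, K u v * f v) * Real.log (∑ v, K u v * f v)) :=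
    fun u => mul_le_mul_of_nonneg_left
      (pointwise (K u) f u (hK u) (hK1 u) (hlazy u) hf) (hν u).le
  have lhs_eq : (1/12:ℝ) * ∑ u, ∑ v, ν u * K u v * ((f u - f v) ^ 2 / (f u + f v))
      = ∑ u, ν u * ((1/12:ℝ) * ∑ v, K u v * ((f u - f v) ^ 2 / (f u + f v))) := by
    rw [Finset.mul_sum]
    refine Finset.sum_congr rfl (fun u _ => ?_)
    rw [Finset.mul_sum, Finset.mul_sum, Finset.mul_sum]
    exact Finset.sum_congr rfl (fun v _ => by ring)
  have rhs_eq : entNu ν f - entNu ν (fun u => ∑ v, K u v * f v)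
      = ∑ u, ν u * (∑ v, K u v * (f v * Real.log (f v)) -
        (∑ v, K u v * f v) * Real.log (∑ v, K u v * f v)) := by
    rw [hEntf]
    unfold entNu
    rw [← Finset.sum_sub_distrib]
    exact Finset.sum_congr rfl (fun u _ => by ring)
  rw [lhs_eq, rhs_eq]
  exact Finset.sum_le_sum (fun u _ => hpt u)

end
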